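/- For every positive integer k there exist constants c_k > 0 and N_k such that for all n ≥ N_k: c_k · Σ_{i=0}^{⌊kn/(2k+1)⌋} C(n,i) ≤ 2^n - vex(n, C_{2k+1}) ≤ Σ_{i=0}^{⌊kn/(2k+1)⌋} C(n,i), where vex(n, C_{2k+1}) is the maximum size of a family F ⊆ 2^[n] inducing a C_{2k+1}-free subgraph of the Kneser cube. -/

import Mathlib

/-- Adjacency in the Kneser cube: two distinct disjoint subsets of `[n]`. -/
def knAdj {n : ℕ} (A B : Finset (Fin n)) : Prop := A ≠ B ∧ Disjoint A B

/-- The induced subgraph of the Kneser cube on the family `F` contains a copy of the graph `G`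
(as a subgraph). -/
def containsCopy {V : Type*} (G : SimpleGraph V) {n : ℕ} (F : Finset (Finset (Fin n))) : Prop :=
  ∃ f : V → Finset (Fin n), Function.Injective f ∧ (∀ v, f v ∈ F) ∧
    ∀ u v, G.Adj u v → knAdj (f u) (f v)

/-- `vex(n, G)`: the maximum size of a family `F ⊆ 2^[n]` such that the induced subgraph
of the Kneser cube on `F` is `G`-free. -/
noncomputable def vex (n : ℕ) {V : Type*} (G : SimpleGraph V) : ℕ :=
  sSup {m | ∃ F : Finset (Finset (Fin n)), ¬ containsCopy G F ∧ F.card = m}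

open Finset

/-! ### Cyclic intervals -/

def Vj (k j : ℕ) : Finset (ZMod (2*k+1)) :=
  (range k).image (fun a => ((j*k + a : ℕ) : ZMod (2*k+1)))

lemma Vj_congr {k j j' : ℕ} (h : j ≡ j' [MOD 2*k+1]) : Vj k j = Vj k j' := by
  unfold Vj
  apply Finset.image_congr
  intro a _
  exact (ZMod.natCast_eq_natCast_iff _ _ _).2 (Nat.ModEq.add_right a (h.mul_right k))

lemma Vj_injOn_aux {k : ℕ} (j : ℕ) : ∀ a ∈ range k, ∀ b ∈ range k,
    ((j*k + a : ℕ) : ZMod (2*k+1)) = ((j*k + b : ℕ) : ZMod (2*k+1)) → a = b := by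
  intro a ha b hb h
  simp only [mem_range] at ha hb
  have h' := (ZMod.natCast_eq_natCast_iff _ _ _).1 h
  have h2 : a ≡ b [MOD 2*k+1] := Nat.ModEq.add_left_cancel' _ h'
  rwa [Nat.ModEq, Nat.mod_eq_of_lt (by omega), Nat.mod_eq_of_lt (by omega)] at h2

lemma Vj_card {k : ℕ} (j : ℕ) : (Vj k j).card = k := by
  rw [Vj, Finset.card_image_of_injOn, Finset.card_range]
  intro a ha b hb h
  exact Vj_injOn_aux j a ha b hb h

lemma Vj_disj {k : ℕ} (hk : 1 ≤ k) (j : ℕ) : Disjoint (Vj k j) (Vj k (j+1)) := by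
  rw [Finset.disjoint_left]
  intro x hx hx'
  simp only [Vj, Finset.mem_image, mem_range] at hx hx'
  obtain ⟨a, ha, rfl⟩ := hx
  obtain ⟨a', ha', h⟩ := hx'
  have h' := (ZMod.natCast_eq_natCast_iff _ _ _).1 h
  have h2 : (k + a') ≡ a [MOD 2*k+1] := by
    have hmid : j*k + (k + a') ≡ j*k + a [MOD 2*k+1] := by
      calc j*k + (k+a') = (j+1)*k + a' := by ring
      _ ≡ j*k + a [MOD 2*k+1] := h'
    exact Nat.ModEq.add_left_cancel' _ hmid
  rw [Nat.ModEq, Nat.mod_eq_of_lt (by omega), Nat.mod_eq_of_lt (by omega)] at h2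
  omega

lemma Vj_inj {k : ℕ} (hk : 1 ≤ k) {j j' : ℕ} (hj : j < 2*k+1) (hj' : j' < 2*k+1)
    (h : Vj k j = Vj k j') : j = j' := by
  have hs : ∑ x ∈ Vj k j, x = ∑ x ∈ Vj k j', x := by rw [h]
  have key : ∀ i : ℕ, ∑ x ∈ Vj k i, x = ((k*(i*k) + ∑ a ∈ range k, a : ℕ) : ZMod (2*k+1)) := by
    intro i
    rw [Vj, Finset.sum_image (Vj_injOn_aux i)]
    push_cast
    rw [Finset.sum_add_distrib, Finset.sum_const, Finset.card_range]
    ring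
  rw [key, key] at hs
  have hmod : (k*(j*k) + ∑ a ∈ range k, a) ≡ (k*(j'*k) + ∑ a ∈ range k, a) [MOD 2*k+1] :=
    (ZMod.natCast_eq_natCast_iff _ _ _).1 hs
  have h1 : k*(j*k) ≡ k*(j'*k) [MOD 2*k+1] := Nat.ModEq.add_right_cancel' _ hmod
  have h4 : 4*(k*k) ≡ 1 [MOD 2*k+1] := by
    have he : 4*(k*k) = (2*k-1)*(2*k+1) + 1 := by
      obtain ⟨m, rfl⟩ : ∃ m, k = m + 1 := ⟨k-1, by omega⟩
      have h1 : 2*(m+1)-1 = 2*m+1 := by omega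
      rw [h1]; ring
    rw [he]
    calc (2*k-1)*(2*k+1) + 1 ≡ (2*k-1)*0 + 1 [MOD 2*k+1] :=
          Nat.ModEq.add_right 1 (Nat.ModEq.mul_left _ (Nat.modEq_zero_iff_dvd.2 dvd_rfl))
    _ = 1 := by ring_nf
  have h2 : (4*(k*k))*j ≡ (4*(k*k))*j' [MOD 2*k+1] := by
    calc (4*(k*k))*j = 4*(k*(j*k)) := by ring
    _ ≡ 4*(k*(j'*k)) [MOD 2*k+1] := h1.mul_left 4
    _ = (4*(k*k))*j' := by ring
  have h3 : j ≡ j' [MOD 2*k+1] := by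
    calc j = 1*j := (one_mul j).symm
    _ ≡ (4*(k*k))*j [MOD 2*k+1] := (h4.symm.mul_right j)
    _ ≡ (4*(k*k))*j' [MOD 2*k+1] := h2
    _ ≡ 1*j' [MOD 2*k+1] := (h4.mul_right j')
    _ = j' := one_mul j'
  rwa [Nat.ModEq, Nat.mod_eq_of_lt hj, Nat.mod_eq_of_lt hj'] at h3

/-! ### Blocks in Fin n -/

def Tj (n k b j : ℕ) : Finset (Fin n) :=
  univ.filter (fun x => x.val < (2*k+1)*b ∧ ((x.val / b : ℕ) : ZMod (2*k+1)) ∈ Vj k j)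

lemma Tj_congr {n k b j j' : ℕ} (h : Vj k j = Vj k j') : Tj n k b j = Tj n k b j' := by
  unfold Tj; rw [h]

lemma Tj_disj {n k b j j' : ℕ} (h : Disjoint (Vj k j) (Vj k j')) :
    Disjoint (Tj n k b j) (Tj n k b j') := by
  rw [Finset.disjoint_left]
  intro x hx hx'
  simp only [Tj, mem_filter] at hx hx'
  exact (Finset.disjoint_left.1 h) hx.2.2 hx'.2.2

lemma Tj_card {n k b : ℕ} (hb : 1 ≤ b) (hn : (2*k+1)*b ≤ n) (j : ℕ) :
    (Tj n k b j).card = k * b := by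
  have hcb : (Tj n k b j).card = (Vj k j ×ˢ range b).card := by
    apply Finset.card_bij (fun (x : Fin n) _ => (((x.val / b : ℕ) : ZMod (2*k+1)), x.val % b))
    · intro x hx
      simp only [Tj, mem_filter] at hx
      exact Finset.mem_product.2 ⟨hx.2.2, mem_range.2 (Nat.mod_lt _ (by omega))⟩
    · intro x hx y hy hxy
      simp only [Tj, mem_filter] at hx hy
      have h1 : x.val / b < 2*k+1 := Nat.div_lt_of_lt_mul (by rw [mul_comm]; exact hx.2.1)
      have h2 : y.val / b < 2*k+1 := Nat.div_lt_of_lt_mul (by rw [mul_comm]; exact hy.2.1)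
      have hdiv : x.val / b = y.val / b := by
        have hfst := congrArg Prod.fst hxy
        simp only at hfst
        have hcast := (ZMod.natCast_eq_natCast_iff _ _ _).1 hfst
        rwa [Nat.ModEq, Nat.mod_eq_of_lt h1, Nat.mod_eq_of_lt h2] at hcast
      have hmod : x.val % b = y.val % b := congrArg Prod.snd hxy
      have ex : x.val = b * (x.val/b) + x.val % b := (Nat.div_add_mod _ _).symm
      have ey : y.val = b * (y.val/b) + y.val % b := (Nat.div_add_mod _ _).symm
      apply Fin.ext
      rw [ex, ey, hdiv, hmod]
    · rintro ⟨c, r⟩ hp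
      rw [Finset.mem_product] at hp
      have hc : c.val < 2*k+1 := ZMod.val_lt c
      have hr : r < b := mem_range.1 hp.2
      have hlt2 : (c.val+1) * b ≤ (2*k+1)*b := Nat.mul_le_mul_right b (by omega)
      have hlt1 : c.val * b + r < (2*k+1)*b := by
        have hstep : c.val * b + r < (c.val + 1) * b := by
          rw [add_mul, one_mul]; omega
        omega
      have hlt : c.val * b + r < n := by omega
      have hdiv : (c.val * b + r) / b = c.val := by
        have hre : c.val * b + r = r + b * c.val := by ring
        rw [hre, Nat.add_mul_div_left _ _ (by omega : 0 < b), Nat.div_eq_of_lt hr, zero_add]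
      refine ⟨⟨c.val * b + r, hlt⟩, ?_, ?_⟩
      · simp only [Tj, mem_filter, mem_univ, true_and]
        refine ⟨hlt1, ?_⟩
        rw [hdiv, ZMod.natCast_rightInverse c]
        exact hp.1
      · rw [Prod.mk.injEq]
        constructor
        · rw [hdiv, ZMod.natCast_rightInverse c]
        · show (c.val * b + r) % b = r
          rw [show c.val*b+r = b*c.val + r from by ring, Nat.mul_add_mod, Nat.mod_eq_of_lt hr]
  rw [hcb, Finset.card_product, Vj_card, card_range]

lemma Vj_eq_image {n k b j : ℕ} (hb : 1 ≤ b) (hn : (2*k+1)*b ≤ n) :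
    (Tj n k b j).image (fun x : Fin n => ((x.val / b : ℕ) : ZMod (2*k+1))) = Vj k j := by
  apply Finset.Subset.antisymm
  · intro c hc
    rw [Finset.mem_image] at hc
    obtain ⟨x, hx, rfl⟩ := hc
    simp only [Tj, mem_filter] at hx
    exact hx.2.2
  · intro c hc
    have hcv : c.val < 2*k+1 := ZMod.val_lt c
    have hlt1 : c.val * b < (2*k+1)*b := by
      calc c.val * b < (c.val+1)*b := by rw [add_mul, one_mul]; omega
      _ ≤ (2*k+1)*b := Nat.mul_le_mul_right b (by omega)
    have hlt : c.val * b < n := by omega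
    rw [Finset.mem_image]
    refine ⟨⟨c.val * b, hlt⟩, ?_, ?_⟩
    · simp only [Tj, mem_filter, mem_univ, true_and]
      refine ⟨hlt1, ?_⟩
      rw [Nat.mul_div_cancel _ (by omega : 0 < b), ZMod.natCast_rightInverse c]
      exact hc
    · simp only []
      rw [Nat.mul_div_cancel _ (by omega : 0 < b), ZMod.natCast_rightInverse c]

lemma Tj_inj {n k b : ℕ} (hk : 1 ≤ k) (hb : 1 ≤ b) (hn : (2*k+1)*b ≤ n)
    {j j' : ℕ} (hj : j < 2*k+1) (hj' : j' < 2*k+1)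
    (h : Tj n k b j = Tj n k b j') : j = j' := by
  apply Vj_inj hk hj hj'
  rw [← Vj_eq_image (n := n) (b := b) (j := j) hb hn,
    ← Vj_eq_image (n := n) (b := b) (j := j') hb hn, h]

/-! ### Part C : the family of big sets is C_{2k+1}-free -/

lemma indep_bound {k : ℕ} (hk : 1 ≤ k) (S : Finset (Fin (2*k+1)))
    (h : ∀ j ∈ S, j + 1 ∉ S) : S.card ≤ k := by
  have hdisj : Disjoint S (S.image (· + 1)) := by
    rw [Finset.disjoint_right]
    intro x hx hxS
    rw [Finset.mem_image] at hx
    obtain ⟨i, hi, rfl⟩ := hx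
    exact h i hi hxS
  have hcard : (S.image (· + 1)).card = S.card :=
    Finset.card_image_of_injective _ (add_left_injective (1 : Fin (2*k+1)))
  have hle : (S ∪ S.image (· + 1)).card ≤ (univ : Finset (Fin (2*k+1))).card :=
    Finset.card_le_univ _
  rw [Finset.card_union_of_disjoint hdisj, hcard, Finset.card_univ, Fintype.card_fin] at hle
  omega

lemma val_one_eq {k : ℕ} (hk : 1 ≤ k) : (1 : Fin (2*k+1)).val = 1 := by
  rw [Fin.val_one']
  exact Nat.mod_eq_of_lt (by omega)

lemma not_copy_big {n k : ℕ} (hk : 1 ≤ k) :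
    ¬ containsCopy (SimpleGraph.cycleGraph (2*k+1))
      (univ.filter (fun A : Finset (Fin n) => k*n/(2*k+1) + 1 ≤ A.card)) := by
  rintro ⟨f, hinj, hmem, hadj⟩
  set t := k*n/(2*k+1) with ht
  have hconsec : ∀ j : Fin (2*k+1), Disjoint (f j) (f (j+1)) := by
    intro j
    have hval : ((j+1) - j : Fin (2*k+1)) = 1 := by
      rw [add_sub_cancel_left]
    have hadj' : (SimpleGraph.cycleGraph (2*k+1)).Adj j (j+1) :=
      SimpleGraph.cycleGraph_adj'.2 (Or.inr (by rw [hval, val_one_eq hk]))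
    exact (hadj _ _ hadj').2
  have hcount : ∀ x : Fin n, (univ.filter (fun j : Fin (2*k+1) => x ∈ f j)).card ≤ k := by
    intro x
    apply indep_bound hk
    intro j hj hj1
    simp only [mem_filter] at hj hj1
    exact (Finset.disjoint_left.1 (hconsec j)) hj.2 hj1.2
  have hswap : ∑ j : Fin (2*k+1), (f j).card
      = ∑ x : Fin n, (univ.filter (fun j : Fin (2*k+1) => x ∈ f j)).card := by
    have h1 : ∀ j : Fin (2*k+1), (f j).card = (univ.filter (fun x : Fin n => x ∈ f j)).card := by
      intro j
      rw [Finset.filter_univ_mem]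
    simp_rw [h1, Finset.card_filter]
    exact Finset.sum_comm
  have hlow : (2*k+1) * (t+1) ≤ ∑ j : Fin (2*k+1), (f j).card := by
    have : ∀ j : Fin (2*k+1), t+1 ≤ (f j).card := by
      intro j
      have := hmem j
      simp only [mem_filter] at this
      exact this.2
    calc (2*k+1) * (t+1) = ∑ _j : Fin (2*k+1), (t+1) := by
          rw [Finset.sum_const, Finset.card_univ, Fintype.card_fin, smul_eq_mul]
    _ ≤ _ := Finset.sum_le_sum (fun j _ => this j)
  have hhigh : ∑ x : Fin n, (univ.filter (fun j : Fin (2*k+1) => x ∈ f j)).card ≤ n * k := by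
    calc _ ≤ ∑ _x : Fin n, k := Finset.sum_le_sum (fun x _ => hcount x)
    _ = n * k := by rw [Finset.sum_const, Finset.card_univ, Fintype.card_fin, smul_eq_mul]
  have hnk : n * k < (2*k+1) * (t+1) := by
    have h0 : (0:ℕ) < 2*k+1 := by omega
    have : k*n/(2*k+1) < t+1 := by omega
    have := (Nat.div_lt_iff_lt_mul h0).1 this
    calc n * k = k * n := mul_comm n k
    _ < (t+1) * (2*k+1) := this
    _ = (2*k+1) * (t+1) := mul_comm _ _
  omega

lemma card_filter_card_eq (n i : ℕ) :
    ((univ : Finset (Finset (Fin n))).filter (fun A => A.card = i)).card = n.choose i := by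
  rw [← Fintype.card_subtype]
  rw [Fintype.card_finset_len, Fintype.card_fin]

lemma big_card (n t : ℕ) :
    ((univ : Finset (Finset (Fin n))).filter (fun A => t + 1 ≤ A.card)).card
      + ∑ i ∈ range (t+1), n.choose i = 2^n := by
  have hneg : ((univ : Finset (Finset (Fin n))).filter (fun A => ¬ (t + 1 ≤ A.card))).card
      = ∑ i ∈ range (t+1), n.choose i := by
    have hmap : ∀ A ∈ (univ : Finset (Finset (Fin n))).filter (fun A => ¬ (t + 1 ≤ A.card)),
        A.card ∈ range (t+1) := by
      intro A hA
      simp only [mem_filter, not_le] at hA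
      exact mem_range.2 (by omega)
    rw [Finset.card_eq_sum_card_fiberwise hmap]
    apply Finset.sum_congr rfl
    intro i hi
    rw [mem_range] at hi
    rw [← card_filter_card_eq n i]
    congr 1
    ext A
    simp only [mem_filter, mem_univ, true_and, not_le]
    constructor
    · rintro ⟨_, h⟩; exact h
    · rintro h; exact ⟨by omega, h⟩
  have hpart := Finset.card_filter_add_card_filter_not
    (s := (univ : Finset (Finset (Fin n)))) (p := fun A => t + 1 ≤ A.card)
  rw [hneg] at hpart
  rw [hpart, Finset.card_univ, Fintype.card_finset, Fintype.card_fin]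

/-! ### Part D : permutation counting -/

lemma perm_count_le {n m : ℕ} (T S : Finset (Fin n)) (hT : T.card = m) (hS : S.card = m) :
    ((univ : Finset (Equiv.Perm (Fin n))).filter (fun σ : Equiv.Perm (Fin n) => T.image ⇑σ = S)).card
      ≤ m.factorial * (n-m).factorial := by
  classical
  rw [← Fintype.card_subtype]
  have hmem0 : ∀ (σ : Equiv.Perm (Fin n)), T.image ⇑σ = S → ∀ x, x ∈ T → σ x ∈ S := by
    intro σ hσ x hx
    rw [← hσ]
    exact Finset.mem_image_of_mem _ hx
  have hnotmem0 : ∀ (σ : Equiv.Perm (Fin n)), T.image ⇑σ = S → ∀ x, x ∉ T → σ x ∉ S := by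
    intro σ hσ x hx hc
    rw [← hσ, Finset.mem_image] at hc
    obtain ⟨y, hy, hyx⟩ := hc
    exact hx (σ.injective hyx ▸ hy)
  have hmem : ∀ (σ : {σ : Equiv.Perm (Fin n) // T.image ⇑σ = S}) (x : {x // x ∈ T}),
      σ.1 x.1 ∈ S := fun σ x => hmem0 σ.1 σ.2 x.1 x.2
  have hnotmem : ∀ (σ : {σ : Equiv.Perm (Fin n) // T.image ⇑σ = S}) (x : {x // x ∉ T}),
      σ.1 x.1 ∉ S := fun σ x => hnotmem0 σ.1 σ.2 x.1 x.2
  let Φ : {σ : Equiv.Perm (Fin n) // T.image ⇑σ = S} →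
      ({x // x ∈ T} ↪ {y // y ∈ S}) × ({x // x ∉ T} ↪ {y // y ∉ S}) :=
    fun σ => (⟨fun x => ⟨σ.1 x.1, hmem σ x⟩,
        fun a b hab => Subtype.ext (σ.1.injective (congrArg Subtype.val hab))⟩,
      ⟨fun x => ⟨σ.1 x.1, hnotmem σ x⟩,
        fun a b hab => Subtype.ext (σ.1.injective (congrArg Subtype.val hab))⟩)
  have hΦ : Function.Injective Φ := by
    rintro ⟨σ, hσ⟩ ⟨τ, hτ⟩ h
    have h1 := congrArg Prod.fst h
    have h2 := congrArg Prod.snd h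
    apply Subtype.ext
    apply Equiv.ext
    intro z
    by_cases hz : z ∈ T
    · have := congrArg (fun (e : {x // x ∈ T} ↪ {y // y ∈ S}) => (e ⟨z, hz⟩).1) h1
      exact this
    · have := congrArg (fun (e : {x // x ∉ T} ↪ {y // y ∉ S}) => (e ⟨z, hz⟩).1) h2
      exact this
  calc Fintype.card {σ : Equiv.Perm (Fin n) // T.image ⇑σ = S}
      ≤ Fintype.card (({x // x ∈ T} ↪ {y // y ∈ S}) × ({x // x ∉ T} ↪ {y // y ∉ S})) :=
        Fintype.card_le_of_injective Φ hΦ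
  _ = m.factorial * (n-m).factorial := by
      rw [Fintype.card_prod, Fintype.card_embedding_eq, Fintype.card_embedding_eq]
      have c1 : Fintype.card {x // x ∈ T} = m := by rw [Fintype.card_coe, hT]
      have c2 : Fintype.card {y // y ∈ S} = m := by rw [Fintype.card_coe, hS]
      have c3 : Fintype.card {x // x ∉ T} = n - m := by
        rw [Fintype.card_subtype_compl, Fintype.card_fin]
        rw [Fintype.card_coe, hT]
      have c4 : Fintype.card {y // y ∉ S} = n - m := by
        rw [Fintype.card_subtype_compl, Fintype.card_fin]
        rw [Fintype.card_coe, hS]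
      rw [c1, c2, c3, c4, Nat.descFactorial_self, Nat.descFactorial_self]

/-! ### Main counting lemma -/

lemma choose_le_missing {n k b : ℕ} (hk : 1 ≤ k) (hb : 1 ≤ b) (hn : (2*k+1)*b ≤ n)
    {F : Finset (Finset (Fin n))} (hF : ¬ containsCopy (SimpleGraph.cycleGraph (2*k+1)) F) :
    n.choose (k*b) ≤ (2*k+1) *
      ((univ : Finset (Finset (Fin n))).filter (fun S => S.card = k*b ∧ S ∉ F)).card := by
  classical
  set m := k*b with hm
  set D := (univ : Finset (Finset (Fin n))).filter (fun S => S.card = m ∧ S ∉ F) with hD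
  -- Step 1: every permutation is bad for some j
  have step1 : ∀ σ : Equiv.Perm (Fin n), ∃ j : Fin (2*k+1), (Tj n k b j.val).image ⇑σ ∉ F := by
    intro σ
    by_contra hcon
    push_neg at hcon
    apply hF
    refine ⟨fun j : Fin (2*k+1) => (Tj n k b j.val).image ⇑σ, ?_, hcon, ?_⟩
    · intro j j' hjj'
      have hT : Tj n k b j.val = Tj n k b j'.val :=
        Finset.image_injective σ.injective hjj'
      exact Fin.ext (Tj_inj hk hb hn j.isLt j'.isLt hT)
    · intro u v huv
      have hne : u ≠ v := huv.ne
      have hTne : (Tj n k b u.val).image ⇑σ ≠ (Tj n k b v.val).image ⇑σ := by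
        intro hEq
        exact hne (Fin.ext (Tj_inj hk hb hn u.isLt v.isLt
          (Finset.image_injective σ.injective hEq)))
      refine ⟨hTne, ?_⟩
      have key : ∀ w : Fin (2*k+1),
          Disjoint ((Tj n k b w.val).image ⇑σ) ((Tj n k b (w+1).val).image ⇑σ) := by
        intro w
        have hmodeq : (w+1).val ≡ w.val + 1 [MOD 2*k+1] := by
          have : (w+1).val = (w.val + (1 : Fin (2*k+1)).val) % (2*k+1) := by
            rw [Fin.add_def]
          rw [this, val_one_eq hk]
          exact Nat.mod_modEq _ _
        have hVeq : Vj k ((w+1).val) = Vj k (w.val + 1) := Vj_congr hmodeq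
        have hTdisj : Disjoint (Tj n k b w.val) (Tj n k b (w+1).val) := by
          rw [Tj_congr hVeq]
          exact Tj_disj (Vj_disj hk w.val)
        exact (Finset.disjoint_image σ.injective).2 hTdisj
      rcases SimpleGraph.cycleGraph_adj'.1 huv with h1 | h1
      · -- u - v has val 1, so u = v + 1
        have : u - v = 1 := Fin.ext (by rw [h1, val_one_eq hk])
        have hu : u = v + 1 := by
          rw [← this]; exact (add_sub_cancel v u).symm
        rw [hu]
        exact (key v).symm
      · have : v - u = 1 := Fin.ext (by rw [h1, val_one_eq hk])
        have hv : v = u + 1 := by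
          rw [← this]; exact (add_sub_cancel u v).symm
        rw [hv]
        exact key u
  -- Step 2: union bound over j
  have hTcard : ∀ j : ℕ, (Tj n k b j).card = m := fun j => Tj_card hb hn j
  have step2 : (n.factorial : ℕ) ≤ (2*k+1) * (D.card * (m.factorial * (n-m).factorial)) := by
    have hcov : (univ : Finset (Equiv.Perm (Fin n))) ⊆
        (univ : Finset (Fin (2*k+1))).biUnion
          (fun j => univ.filter (fun σ : Equiv.Perm (Fin n) => (Tj n k b j.val).image ⇑σ ∉ F)) := by
      intro σ _
      rw [Finset.mem_biUnion]
      obtain ⟨j, hj⟩ := step1 σ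
      exact ⟨j, mem_univ _, mem_filter.2 ⟨mem_univ _, hj⟩⟩
    have h1 : Fintype.card (Equiv.Perm (Fin n)) ≤
        ∑ j : Fin (2*k+1),
          (univ.filter (fun σ : Equiv.Perm (Fin n) => (Tj n k b j.val).image ⇑σ ∉ F)).card := by
      rw [← Finset.card_univ]
      exact le_trans (Finset.card_le_card hcov) (Finset.card_biUnion_le)
    have h2 : ∀ j : Fin (2*k+1),
        (univ.filter (fun σ : Equiv.Perm (Fin n) => (Tj n k b j.val).image ⇑σ ∉ F)).card ≤
          D.card * (m.factorial * (n-m).factorial) := by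
      intro j
      have hsub : (univ.filter (fun σ : Equiv.Perm (Fin n) => (Tj n k b j.val).image ⇑σ ∉ F)) ⊆
          D.biUnion (fun S => univ.filter
            (fun σ : Equiv.Perm (Fin n) => (Tj n k b j.val).image ⇑σ = S)) := by
        intro σ hσ
        rw [mem_filter] at hσ
        rw [Finset.mem_biUnion]
        refine ⟨(Tj n k b j.val).image ⇑σ, ?_, mem_filter.2 ⟨mem_univ _, rfl⟩⟩
        rw [hD, mem_filter]
        exact ⟨mem_univ _, by rw [Finset.card_image_of_injective _ σ.injective, hTcard], hσ.2⟩
      calc _ ≤ (D.biUnion (fun S => univ.filter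
            (fun σ : Equiv.Perm (Fin n) => (Tj n k b j.val).image ⇑σ = S))).card :=
            Finset.card_le_card hsub
      _ ≤ ∑ S ∈ D, (univ.filter
            (fun σ : Equiv.Perm (Fin n) => (Tj n k b j.val).image ⇑σ = S)).card :=
            Finset.card_biUnion_le
      _ ≤ ∑ _S ∈ D, m.factorial * (n-m).factorial := by
            apply Finset.sum_le_sum
            intro S hS
            rw [hD, mem_filter] at hS
            exact perm_count_le _ _ (hTcard j.val) hS.2.1
      _ = D.card * (m.factorial * (n-m).factorial) := by
            rw [Finset.sum_const, smul_eq_mul]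
    calc (n.factorial : ℕ) = Fintype.card (Equiv.Perm (Fin n)) := by
          rw [Fintype.card_perm, Fintype.card_fin]
    _ ≤ ∑ j : Fin (2*k+1), (univ.filter
          (fun σ : Equiv.Perm (Fin n) => (Tj n k b j.val).image ⇑σ ∉ F)).card := h1
    _ ≤ ∑ _j : Fin (2*k+1), D.card * (m.factorial * (n-m).factorial) :=
          Finset.sum_le_sum (fun j _ => h2 j)
    _ = (2*k+1) * (D.card * (m.factorial * (n-m).factorial)) := by
          rw [Finset.sum_const, Finset.card_univ, Fintype.card_fin, smul_eq_mul]
  -- Step 3: cancel factorials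
  have hmn : m ≤ n := by
    calc m = k*b := hm
    _ ≤ (2*k+1)*b := Nat.mul_le_mul_right b (by omega)
    _ ≤ n := hn
  have hfact : n.choose m * (m.factorial * (n-m).factorial) = n.factorial := by
    rw [← mul_assoc]
    exact Nat.choose_mul_factorial_mul_factorial hmn
  have : n.choose m * (m.factorial * (n-m).factorial) ≤
      ((2*k+1) * D.card) * (m.factorial * (n-m).factorial) := by
    rw [hfact]
    calc n.factorial ≤ (2*k+1) * (D.card * (m.factorial * (n-m).factorial)) := step2
    _ = ((2*k+1) * D.card) * (m.factorial * (n-m).factorial) := by ring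
  have hpos : 0 < m.factorial * (n-m).factorial :=
    Nat.mul_pos (Nat.factorial_pos _) (Nat.factorial_pos _)
  exact Nat.le_of_mul_le_mul_right (by
    calc n.choose m * (m.factorial * (n-m).factorial) ≤ _ := this
    ) hpos |>.trans_eq rfl

/-! ### Part E : binomial coefficient estimates -/

lemma choose_ratio_down {n k t : ℕ} (hk : 1 ≤ k) (ht : (2*k+1)*t ≤ k*n) {i : ℕ}
    (hi : i + 1 ≤ t) : (k+1) * n.choose i ≤ k * n.choose (i+1) := by
  have hn0 : 0 < n := by
    rcases Nat.eq_zero_or_pos n with h | h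
    · subst h; simp at ht; omega
    · exact h
  have htn : t < n := by
    have h1 : k*n < (2*k+1)*n := (Nat.mul_lt_mul_right hn0).2 (by omega)
    exact Nat.lt_of_mul_lt_mul_left (lt_of_le_of_lt ht h1)
  have key : (k+1)*(i+1) ≤ k*(n-i) := by
    have e1 : (k+1)*(i+1) ≤ (k+1)*t := Nat.mul_le_mul_left _ hi
    have e2 : (k+1)*t + k*t = (2*k+1)*t := by ring
    have e3 : k*(n-t) + k*t = k*n := by
      rw [← Nat.mul_add, Nat.sub_add_cancel (le_of_lt htn)]
    have e4 : (k+1)*t ≤ k*(n-t) := by omega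
    have e5 : k*(n-t) ≤ k*(n-i) :=
      Nat.mul_le_mul_left _ (Nat.sub_le_sub_left (by omega) n)
    omega
  have hmul : ((k+1) * n.choose i) * (i+1) ≤ (k * n.choose (i+1)) * (i+1) := by
    calc ((k+1) * n.choose i) * (i+1) = ((k+1)*(i+1)) * n.choose i := by ring
    _ ≤ (k*(n-i)) * n.choose i := Nat.mul_le_mul_right _ key
    _ = k * (n.choose i * (n-i)) := by ring
    _ = k * (n.choose (i+1) * (i+1)) := by rw [← Nat.choose_succ_right_eq]
    _ = (k * n.choose (i+1)) * (i+1) := by ring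
  exact Nat.le_of_mul_le_mul_right hmul (by omega)

lemma choose_down_pow {n k t : ℕ} (hk : 1 ≤ k) (ht : (2*k+1)*t ≤ k*n) :
    ∀ j, j ≤ t → (k+1)^j * n.choose (t-j) ≤ k^j * n.choose t := by
  intro j
  induction j with
  | zero => intro _; simp
  | succ j ih =>
    intro hj
    have hj' : j ≤ t := by omega
    have hstep : (k+1) * n.choose (t-(j+1)) ≤ k * n.choose (t-j) := by
      have he : t-(j+1)+1 = t-j := by omega
      have := choose_ratio_down hk ht (i := t-(j+1)) (by omega)
      rwa [he] at this
    calc (k+1)^(j+1) * n.choose (t-(j+1))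
        = (k+1)^j * ((k+1) * n.choose (t-(j+1))) := by ring
    _ ≤ (k+1)^j * (k * n.choose (t-j)) := Nat.mul_le_mul_left _ hstep
    _ = k * ((k+1)^j * n.choose (t-j)) := by ring
    _ ≤ k * (k^j * n.choose t) := Nat.mul_le_mul_left _ (ih hj')
    _ = k^(j+1) * n.choose t := by ring

lemma sum_choose_le {n k t : ℕ} (hk : 1 ≤ k) (ht : (2*k+1)*t ≤ k*n) :
    (∑ i ∈ range (t+1), (n.choose i : ℝ)) ≤ (k+1) * n.choose t := by
  have hr0 : (0:ℝ) < k+1 := by positivity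
  set r : ℝ := k / (k+1) with hrdef
  have hr1 : (0:ℝ) ≤ r := by positivity
  have hrlt : r < 1 := by
    rw [hrdef, div_lt_one hr0]
    norm_num
  have hterm : ∀ j ≤ t, (n.choose (t-j) : ℝ) ≤ r^j * n.choose t := by
    intro j hj
    have := choose_down_pow hk ht j hj
    have hcast : ((k+1:ℕ):ℝ)^j * n.choose (t-j) ≤ ((k:ℕ):ℝ)^j * n.choose t := by
      exact_mod_cast (by exact_mod_cast this : ((k+1)^j * n.choose (t-j) : ℕ) ≤ (k^j * n.choose t : ℕ))
    have hpow : (0:ℝ) < ((k:ℝ)+1)^j := by positivity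
    rw [hrdef, div_pow, div_mul_eq_mul_div, le_div_iff₀ hpow]
    calc (n.choose (t-j) : ℝ) * ((k:ℝ)+1)^j = ((k:ℝ)+1)^j * n.choose (t-j) := by ring
    _ ≤ (k:ℝ)^j * n.choose t := by push_cast at hcast ⊢; linarith
    _ = (k:ℝ)^j * n.choose t * 1 := by ring
    _ = _ := by ring
  have hgeom : (∑ j ∈ range (t+1), r^j) ≤ (k+1 : ℝ) := by
    have hmul := geom_sum_mul r (t+1)
    have h1r : (1 - r) * ((k:ℝ)+1) = 1 := by
      rw [hrdef]
      field_simp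
      ring
    have hsum1 : (∑ j ∈ range (t+1), r^j) * (1 - r) = 1 - r^(t+1) := by
      have : (∑ j ∈ range (t+1), r^j) * (r - 1) = r^(t+1) - 1 := hmul
      linarith [this]
    have hpow : (0:ℝ) ≤ r^(t+1) := by positivity
    calc (∑ j ∈ range (t+1), r^j)
        = ((∑ j ∈ range (t+1), r^j) * (1-r)) * ((k:ℝ)+1) := by
          rw [mul_assoc, h1r, mul_one]
    _ = (1 - r^(t+1)) * ((k:ℝ)+1) := by rw [hsum1]
    _ ≤ 1 * ((k:ℝ)+1) := by nlinarith
    _ = (k:ℝ)+1 := by ring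
  have hrefl : (∑ i ∈ range (t+1), (n.choose i : ℝ))
      = ∑ j ∈ range (t+1), (n.choose (t+1-1-j) : ℝ) :=
    (Finset.sum_range_reflect (fun i => (n.choose i : ℝ)) (t+1)).symm
  have hch0 : (0:ℝ) ≤ n.choose t := by positivity
  calc (∑ i ∈ range (t+1), (n.choose i : ℝ))
      = ∑ j ∈ range (t+1), (n.choose (t-j) : ℝ) := by
        rw [hrefl]
        apply Finset.sum_congr rfl
        intro j hj
        congr 1
  _ ≤ ∑ j ∈ range (t+1), r^j * (n.choose t : ℝ) := by
        apply Finset.sum_le_sum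
        intro j hj
        exact hterm j (Nat.lt_succ_iff.mp (mem_range.1 hj))
  _ ≤ ((k:ℝ)+1) * (n.choose t : ℝ) := by
        rw [← Finset.sum_mul]
        exact mul_le_mul_of_nonneg_right hgeom hch0
  _ = (k+1) * n.choose t := by push_cast; ring

lemma choose_up_pow {n k b t : ℕ} (hk : 1 ≤ k) (hb : 1 ≤ b)
    (hmt : k*b ≤ t) (htk : t ≤ k*b + k) (hup : n ≤ (4*k+2)*b) :
    n.choose t ≤ (4*k+2)^k * n.choose (k*b) := by
  set m := k*b with hm
  have hstep : ∀ i, m ≤ i → n.choose (i+1) * b ≤ n.choose i * n := by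
    intro i hi
    have hbi : b ≤ i + 1 := by
      calc b ≤ k*b := Nat.le_mul_of_pos_left b (by omega)
      _ ≤ i := hi
      _ ≤ i+1 := by omega
    calc n.choose (i+1) * b ≤ n.choose (i+1) * (i+1) := Nat.mul_le_mul_left _ hbi
    _ = n.choose i * (n - i) := Nat.choose_succ_right_eq n i
    _ ≤ n.choose i * n := Nat.mul_le_mul_left _ (Nat.sub_le n i)
  have hind : ∀ j, n.choose (m+j) * b^j ≤ n.choose m * n^j := by
    intro j
    induction j with
    | zero => simp
    | succ j ih =>
      calc n.choose (m+(j+1)) * b^(j+1) = (n.choose (m+j+1) * b) * b^j := by ring_nf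
      _ ≤ (n.choose (m+j) * n) * b^j := Nat.mul_le_mul_right _ (hstep (m+j) (by omega))
      _ = n * (n.choose (m+j) * b^j) := by ring
      _ ≤ n * (n.choose m * n^j) := Nat.mul_le_mul_left _ ih
      _ = n.choose m * n^(j+1) := by ring
  set d := t - m with hd
  have hdk : d ≤ k := by omega
  have h1 : n.choose t * b^d ≤ n.choose m * n^d := by
    have : m + d = t := by omega
    rw [← this]
    exact hind d
  have h2 : n.choose m * n^d ≤ n.choose m * ((4*k+2)^d * b^d) := by
    apply Nat.mul_le_mul_left
    rw [← Nat.mul_pow]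
    exact Nat.pow_le_pow_left hup d
  have h3 : n.choose t * b^d ≤ (n.choose m * (4*k+2)^d) * b^d := by
    calc n.choose t * b^d ≤ n.choose m * ((4*k+2)^d * b^d) := le_trans h1 h2
    _ = (n.choose m * (4*k+2)^d) * b^d := by ring
  have hbd : 0 < b^d := by positivity
  have h4 : n.choose t ≤ n.choose m * (4*k+2)^d := Nat.le_of_mul_le_mul_right h3 hbd
  calc n.choose t ≤ n.choose m * (4*k+2)^d := h4
  _ ≤ n.choose m * (4*k+2)^k := Nat.mul_le_mul_left _ (Nat.pow_le_pow_right (by omega) hdk)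
  _ = (4*k+2)^k * n.choose m := by ring


/-- For every `k ≥ 1` there are constants `c_k > 0` and `N_k` such that for all `n ≥ N_k`,
`2^n - vex(n, C_{2k+1})` is within constant factors of `∑_{i=0}^{⌊kn/(2k+1)⌋} C(n,i)`. -/
theorem stmt_13 (k : ℕ) (hk : 1 ≤ k) :
    ∃ c : ℝ, 0 < c ∧ ∃ N : ℕ, ∀ n : ℕ, N ≤ n →
      c * (∑ i ∈ Finset.range (k * n / (2 * k + 1) + 1), (n.choose i : ℝ)) ≤
        2 ^ n - (vex n (SimpleGraph.cycleGraph (2 * k + 1)) : ℝ) ∧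
      2 ^ n - (vex n (SimpleGraph.cycleGraph (2 * k + 1)) : ℝ) ≤
        ∑ i ∈ Finset.range (k * n / (2 * k + 1) + 1), (n.choose i : ℝ) := by
  classical
  refine ⟨((2*k+1 : ℝ) * ((k+1) * (4*k+2)^k))⁻¹, by positivity, 8*k+5, ?_⟩
  intro n hn
  set G := SimpleGraph.cycleGraph (2 * k + 1) with hG
  set t := k * n / (2 * k + 1) with htdef
  set b := n / (2 * k + 1) with hbdef
  have hb1 : 1 ≤ b := (Nat.one_le_div_iff (by omega)).2 (by omega)
  have hbn : (2*k+1)*b ≤ n := by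
    rw [hbdef, mul_comm]; exact Nat.div_mul_le_self n _
  have hndm : (2*k+1)*b + n % (2*k+1) = n := by
    rw [hbdef]; exact Nat.div_add_mod n (2*k+1)
  have hrlt : n % (2*k+1) < 2*k+1 := Nat.mod_lt _ (by omega)
  have hmt : k*b ≤ t := by
    rw [htdef, hbdef]; exact Nat.mul_div_le_mul_div_assoc _ _ _
  have htk : t ≤ k*b + k := by
    have he : k*n = (2*k+1)*(k*b) + k*(n % (2*k+1)) := by
      calc k*n = k*((2*k+1)*b + n % (2*k+1)) := by rw [hndm]
      _ = (2*k+1)*(k*b) + k*(n%(2*k+1)) := by ring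
    have ht2 : t = k*b + k*(n%(2*k+1)) / (2*k+1) := by
      rw [htdef, he, Nat.mul_add_div (by omega)]
    have hq : k*(n%(2*k+1)) / (2*k+1) ≤ k := by
      calc k*(n%(2*k+1)) / (2*k+1) ≤ k*(2*k+1)/(2*k+1) :=
            Nat.div_le_div_right (Nat.mul_le_mul_left _ (le_of_lt hrlt))
      _ = k := Nat.mul_div_cancel _ (by omega)
    omega
  have hup : n ≤ (4*k+2)*b := by
    have h2 : (4*k+2)*b = 2*((2*k+1)*b) := by ring
    omega
  have hts : (2*k+1)*t ≤ k*n := by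
    rw [htdef, mul_comm]; exact Nat.div_mul_le_self _ _
  have hcard_univ : ((univ : Finset (Finset (Fin n))).card) = 2^n := by
    rw [Finset.card_univ, Fintype.card_finset, Fintype.card_fin]
  have hvexset_bdd : BddAbove {m | ∃ F : Finset (Finset (Fin n)), ¬ containsCopy G F ∧ F.card = m} := by
    refine ⟨2^n, ?_⟩
    rintro x ⟨F, _, rfl⟩
    calc F.card ≤ (univ : Finset (Finset (Fin n))).card := Finset.card_le_univ F
    _ = 2^n := hcard_univ
  have hvexset_ne : {m | ∃ F : Finset (Finset (Fin n)), ¬ containsCopy G F ∧ F.card = m}.Nonempty := by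
    refine ⟨0, ∅, ?_, Finset.card_empty⟩
    rintro ⟨f, _, hmem, _⟩
    exact Finset.notMem_empty _ (hmem (⟨0, by omega⟩ : Fin (2*k+1)))
  -- upper bound
  have hbig := big_card n t
  have hvex_ge : (univ.filter (fun A : Finset (Fin n) => t + 1 ≤ A.card)).card ≤ vex n G := by
    apply le_csSup hvexset_bdd
    exact ⟨_, not_copy_big hk, rfl⟩
  have hSnn : (0:ℝ) ≤ ∑ i ∈ range (t+1), (n.choose i : ℝ) := by positivity
  have hbigR : ((univ.filter (fun A : Finset (Fin n) => t + 1 ≤ A.card)).card : ℝ)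
      + ∑ i ∈ range (t+1), (n.choose i : ℝ) = 2^n := by
    have := congrArg (fun x : ℕ => (x : ℝ)) hbig
    push_cast at this
    convert this using 2
  have hupperR : 2 ^ n - (vex n G : ℝ) ≤ ∑ i ∈ range (t+1), (n.choose i : ℝ) := by
    have hge : ((univ.filter (fun A : Finset (Fin n) => t + 1 ≤ A.card)).card : ℝ) ≤ vex n G := by
      exact_mod_cast hvex_ge
    linarith
  -- lower bound
  obtain ⟨F, hFfree, hFcard⟩ := Nat.sSup_mem hvexset_ne hvexset_bdd
  set D := (univ : Finset (Finset (Fin n))).filter (fun S => S.card = k*b ∧ S ∉ F) with hDdef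
  have hmiss : n.choose (k*b) ≤ (2*k+1) * D.card := choose_le_missing hk hb1 hbn hFfree
  have hdisj : Disjoint F D := by
    rw [Finset.disjoint_right]
    intro S hS
    rw [hDdef, mem_filter] at hS
    exact hS.2.2
  have hFD : F.card + D.card ≤ 2^n := by
    calc F.card + D.card = (F ∪ D).card := (Finset.card_union_of_disjoint hdisj).symm
    _ ≤ (univ : Finset (Finset (Fin n))).card := Finset.card_le_univ _
    _ = 2^n := hcard_univ
  have hQ : (vex n G : ℝ) + (D.card : ℝ) ≤ 2^n := by
    have : (F.card : ℝ) + D.card ≤ 2^n := by exact_mod_cast hFD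
    have hveq : vex n G = F.card := by
      rw [hG, vex]
      exact hFcard.symm
    rw [hveq]
    exact this
  have hchain : (∑ i ∈ range (t+1), (n.choose i : ℝ))
      ≤ (k+1) * ((4*k+2)^k * (n.choose (k*b) : ℝ)) := by
    calc (∑ i ∈ range (t+1), (n.choose i : ℝ)) ≤ (k+1) * n.choose t := sum_choose_le hk hts
    _ ≤ (k+1) * ((4*k+2)^k * (n.choose (k*b) : ℝ)) := by
        apply mul_le_mul_of_nonneg_left _ (by positivity)
        have := choose_up_pow hk hb1 hmt htk hup
        exact_mod_cast this
  refine ⟨?_, hupperR⟩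
  have hA : (0:ℝ) < (k+1 : ℝ) * (4*k+2:ℝ)^k := by positivity
  have h2k1 : (0:ℝ) < (2*k+1:ℝ) := by positivity
  have hDge : (n.choose (k*b) : ℝ) ≤ (2*k+1) * D.card := by exact_mod_cast hmiss
  calc ((2*k+1 : ℝ) * ((k+1) * (4*k+2)^k))⁻¹ * (∑ i ∈ range (t+1), (n.choose i : ℝ))
      ≤ ((2*k+1 : ℝ) * ((k+1) * (4*k+2)^k))⁻¹ * ((k+1) * ((4*k+2)^k * (n.choose (k*b) : ℝ))) := by
        apply mul_le_mul_of_nonneg_left hchain (by positivity)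
  _ = (n.choose (k*b) : ℝ) / (2*k+1) := by
        field_simp
  _ ≤ (D.card : ℝ) := by
        rw [div_le_iff₀ h2k1]
        linarith [hDge]
  _ ≤ 2 ^ n - (vex n G : ℝ) := by linarith [hQ]
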